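/- Let d, k ≥ 1, let O be a real k×d matrix, let P be a real d×d positive-definite matrix, let R be a real k×k positive-definite matrix, let m ∈ ℝ^d and y ∈ ℝ^k. Set K = P Oᵀ (O P Oᵀ + R)⁻¹. Then sup_{x′∈ℝ^d} N̄(x′; m, P) N̄(y; O x′, R) > 0 and, for every x ∈ ℝ^d, (N̄(x; m, P) · N̄(y; O x, R)) / (sup_{x′∈ℝ^d} N̄(x′; m, P) N̄(y; O x′, R)) = N̄(x; m + K(y − O m), (I − K O) P), with (I − K O) P positive definite. In particular, the possibilistic observation-update step f_{t|t}(x) = f_{t|t-1}(x) h_t(O x) / sup_{x′} f_{t|t-1}(x′) h_t(O x′) applied to a Gaussian possibility prediction f_{t|t-1} = N̄(·; m, P) and Gaussian possibility likelihood h_t(z) = N̄(y; z, R) yields exactly the standard Kalman filter observation update of mean and covariance. -/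

import Mathlib

open Matrix

/-- The Gaussian possibility function `N̄(x; m, S) = exp(−½ (x−m)ᵀ S⁻¹ (x−m))`. -/
noncomputable def gaussPoss {d : ℕ} (m : Fin d → ℝ) (S : Matrix (Fin d) (Fin d) ℝ)
    (x : Fin d → ℝ) : ℝ :=
  Real.exp (-(1 / 2 : ℝ) * ((x - m) ⬝ᵥ (S⁻¹ *ᵥ (x - m))))

private lemma dp_mulVec_left {a b : ℕ} (N : Matrix (Fin a) (Fin b) ℝ)
    (v : Fin b → ℝ) (w : Fin a → ℝ) :
    (N *ᵥ v) ⬝ᵥ w = v ⬝ᵥ (Nᵀ *ᵥ w) := by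
  rw [Matrix.dotProduct_mulVec, Matrix.vecMul_transpose]

theorem stmt_14 {d k : ℕ} (hd : 1 ≤ d) (hk : 1 ≤ k)
    (O : Matrix (Fin k) (Fin d) ℝ) (P : Matrix (Fin d) (Fin d) ℝ)
    (R : Matrix (Fin k) (Fin k) ℝ) (hP : P.PosDef) (hR : R.PosDef)
    (m : Fin d → ℝ) (y : Fin k → ℝ) (K : Matrix (Fin d) (Fin k) ℝ)
    (hK : K = P * Oᵀ * (O * P * Oᵀ + R)⁻¹) :
    (0 < ⨆ x' : Fin d → ℝ, gaussPoss m P x' * gaussPoss (O *ᵥ x') R y) ∧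
    ((1 - K * O) * P).PosDef ∧
      ∀ x : Fin d → ℝ,
        (gaussPoss m P x * gaussPoss (O *ᵥ x) R y) /
            (⨆ x' : Fin d → ℝ, gaussPoss m P x' * gaussPoss (O *ᵥ x') R y) =
          gaussPoss (m + K *ᵥ (y - O *ᵥ m)) ((1 - K * O) * P) x := by
  have hPdet : IsUnit P.det := hP.det_pos.ne'.isUnit
  have hRdet : IsUnit R.det := hR.det_pos.ne'.isUnit
  have hPsymm : Pᵀ = P := by
    rw [← Matrix.conjTranspose_eq_transpose_of_trivial]; exact hP.isHermitian
  set S : Matrix (Fin k) (Fin k) ℝ := O * P * Oᵀ + R with hS_def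
  have hOPOt : (O * P * Oᵀ).PosSemidef := by
    have := hP.posSemidef.mul_mul_conjTranspose_same O
    rwa [Matrix.conjTranspose_eq_transpose_of_trivial] at this
  have hS : S.PosDef := Matrix.PosDef.posSemidef_add hOPOt hR
  have hSdet : IsUnit S.det := hS.det_pos.ne'.isUnit
  have hSS : S * S⁻¹ = 1 := Matrix.mul_nonsing_inv _ hSdet
  have hSS' : S⁻¹ * S = 1 := Matrix.nonsing_inv_mul _ hSdet
  have hPP' : P⁻¹ * P = 1 := Matrix.nonsing_inv_mul _ hPdet
  have hRR : R * R⁻¹ = 1 := Matrix.mul_nonsing_inv _ hRdet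
  have hRR' : R⁻¹ * R = 1 := Matrix.nonsing_inv_mul _ hRdet
  set M : Matrix (Fin d) (Fin d) ℝ := P⁻¹ + Oᵀ * R⁻¹ * O with hM_def
  have hKS : K * S = P * Oᵀ := by
    rw [hK, Matrix.mul_assoc (P * Oᵀ) S⁻¹ S, hSS', Matrix.mul_one]
  have hOPOt_eq : O * P * Oᵀ = S - R := by rw [hS_def]; abel
  have h1 : M * (P * Oᵀ) = Oᵀ * R⁻¹ * S := by
    rw [hM_def, Matrix.add_mul, ← Matrix.mul_assoc P⁻¹ P Oᵀ, hPP', Matrix.one_mul]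
    have e1 : (Oᵀ * R⁻¹ * O) * (P * Oᵀ) = Oᵀ * R⁻¹ * (O * P * Oᵀ) := by
      rw [Matrix.mul_assoc (Oᵀ * R⁻¹) O (P * Oᵀ), ← Matrix.mul_assoc O P Oᵀ]
    rw [e1, hOPOt_eq, Matrix.mul_sub, Matrix.mul_assoc Oᵀ R⁻¹ R, hRR', Matrix.mul_one]
    abel
  have hMK : M * K = Oᵀ * R⁻¹ := by
    have h2 : M * K * S = Oᵀ * R⁻¹ * S := by rw [Matrix.mul_assoc M K S, hKS, h1]
    calc M * K = M * K * (S * S⁻¹) := by rw [hSS, Matrix.mul_one]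
      _ = M * K * S * S⁻¹ := by rw [Matrix.mul_assoc (M * K) S S⁻¹]
      _ = Oᵀ * R⁻¹ * S * S⁻¹ := by rw [h2]
      _ = Oᵀ * R⁻¹ := by rw [Matrix.mul_assoc (Oᵀ * R⁻¹) S S⁻¹, hSS, Matrix.mul_one]
  have hSinvsymm : S⁻¹ᵀ = S⁻¹ := by
    rw [Matrix.transpose_nonsing_inv]
    congr 1
    rw [← Matrix.conjTranspose_eq_transpose_of_trivial]; exact hS.isHermitian
  have hRinvsymm : R⁻¹ᵀ = R⁻¹ := by
    rw [Matrix.transpose_nonsing_inv]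
    congr 1
    rw [← Matrix.conjTranspose_eq_transpose_of_trivial]; exact hR.isHermitian
  have hPinvsymm : P⁻¹ᵀ = P⁻¹ := by
    rw [Matrix.transpose_nonsing_inv, hPsymm]
  have hMsymm : Mᵀ = M := by
    rw [hM_def]
    simp [Matrix.transpose_add, Matrix.transpose_mul, Matrix.transpose_transpose,
      hPinvsymm, hRinvsymm, Matrix.mul_assoc]
  have hKtM : Kᵀ * M = R⁻¹ * O := by
    have h := congrArg Matrix.transpose hMK
    rw [Matrix.transpose_mul, Matrix.transpose_mul, hMsymm, hRinvsymm,
      Matrix.transpose_transpose] at h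
    exact h
  have hKt : Kᵀ = S⁻¹ * (O * P) := by
    rw [hK, Matrix.transpose_mul, Matrix.transpose_mul, hSinvsymm,
      Matrix.transpose_transpose, hPsymm]
  have hKMK : Kᵀ * (M * K) + S⁻¹ = R⁻¹ := by
    rw [hMK, hKt]
    have e1 : S⁻¹ * (O * P) * (Oᵀ * R⁻¹) = S⁻¹ * (O * P * Oᵀ) * R⁻¹ := by
      rw [Matrix.mul_assoc S⁻¹ (O * P) (Oᵀ * R⁻¹), ← Matrix.mul_assoc (O * P) Oᵀ R⁻¹,
        ← Matrix.mul_assoc S⁻¹ (O * P * Oᵀ) R⁻¹]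
    rw [e1, hOPOt_eq, Matrix.mul_sub, hSS', Matrix.sub_mul, Matrix.one_mul,
      Matrix.mul_assoc S⁻¹ R R⁻¹, hRR, Matrix.mul_one]
    abel
  have hMSig : M * ((1 - K * O) * P) = 1 := by
    rw [Matrix.sub_mul, Matrix.one_mul, Matrix.mul_sub]
    have eMP : M * P = 1 + Oᵀ * R⁻¹ * O * P := by rw [hM_def, Matrix.add_mul, hPP']
    have eMKOP : M * (K * O * P) = Oᵀ * R⁻¹ * O * P := by
      rw [Matrix.mul_assoc K O P, ← Matrix.mul_assoc M K (O * P), hMK,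
        Matrix.mul_assoc (Oᵀ * R⁻¹) O P, ← Matrix.mul_assoc (Oᵀ * R⁻¹) O P]
    rw [eMP, eMKOP]
    abel
  have hMpd : M.PosDef := by
    rw [hM_def]
    apply Matrix.PosDef.add_posSemidef hP.inv
    have := hR.inv.posSemidef.conjTranspose_mul_mul_same O
    rwa [Matrix.conjTranspose_eq_transpose_of_trivial] at this
  have hMinv : M⁻¹ = (1 - K * O) * P := Matrix.inv_eq_right_inv hMSig
  have hSigpd : ((1 - K * O) * P).PosDef := hMinv ▸ hMpd.inv
  have hSigM : ((1 - K * O) * P) * M = 1 := mul_eq_one_comm.mp hMSig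
  have hSiginv : ((1 - K * O) * P)⁻¹ = M := Matrix.inv_eq_right_inv hSigM
  set e : Fin k → ℝ := y - O *ᵥ m with he_def
  set mh : Fin d → ℝ := m + K *ᵥ e with hmh_def
  have key : ∀ x : Fin d → ℝ,
      (x - m) ⬝ᵥ (P⁻¹ *ᵥ (x - m)) + (y - O *ᵥ x) ⬝ᵥ (R⁻¹ *ᵥ (y - O *ᵥ x))
        = (x - mh) ⬝ᵥ (M *ᵥ (x - mh)) + e ⬝ᵥ (S⁻¹ *ᵥ e) := by
    intro x
    have hu : x - mh = (x - m) - K *ᵥ e := by rw [hmh_def]; abel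
    have hv : y - O *ᵥ x = e - O *ᵥ (x - m) := by
      rw [he_def, Matrix.mulVec_sub]; abel
    set u : Fin d → ℝ := x - m with hu_def
    rw [hu, hv]
    have s1 : u ⬝ᵥ (M *ᵥ u)
        = u ⬝ᵥ (P⁻¹ *ᵥ u) + (O *ᵥ u) ⬝ᵥ (R⁻¹ *ᵥ (O *ᵥ u)) := by
      rw [dp_mulVec_left O u (R⁻¹ *ᵥ (O *ᵥ u)), Matrix.mulVec_mulVec, Matrix.mulVec_mulVec,
        hM_def, Matrix.add_mulVec, dotProduct_add]
    have s2 : u ⬝ᵥ (M *ᵥ (K *ᵥ e)) = (O *ᵥ u) ⬝ᵥ (R⁻¹ *ᵥ e) := by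
      rw [dp_mulVec_left O u (R⁻¹ *ᵥ e), Matrix.mulVec_mulVec, Matrix.mulVec_mulVec, hMK]
    have s3 : (K *ᵥ e) ⬝ᵥ (M *ᵥ u) = e ⬝ᵥ (R⁻¹ *ᵥ (O *ᵥ u)) := by
      rw [dp_mulVec_left K e (M *ᵥ u), Matrix.mulVec_mulVec, hKtM, ← Matrix.mulVec_mulVec]
    have s4 : (K *ᵥ e) ⬝ᵥ (M *ᵥ (K *ᵥ e)) + e ⬝ᵥ (S⁻¹ *ᵥ e) = e ⬝ᵥ (R⁻¹ *ᵥ e) := by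
      rw [dp_mulVec_left K e (M *ᵥ (K *ᵥ e)), Matrix.mulVec_mulVec, Matrix.mulVec_mulVec,
        ← dotProduct_add, ← Matrix.add_mulVec, Matrix.mul_assoc Kᵀ M K, hKMK]
    simp only [Matrix.mulVec_sub, dotProduct_sub, sub_dotProduct]
    linarith [s1, s2, s3, s4]
  set c : ℝ := e ⬝ᵥ (S⁻¹ *ᵥ e) with hc_def
  have hc0 : 0 ≤ c := by
    have := hS.inv.posSemidef.dotProduct_mulVec_nonneg e
    simpa using this
  have hqnn : ∀ x : Fin d → ℝ, 0 ≤ (x - mh) ⬝ᵥ (M *ᵥ (x - mh)) := by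
    intro x
    have := hMpd.posSemidef.dotProduct_mulVec_nonneg (x - mh)
    simpa using this
  have hgval : ∀ x : Fin d → ℝ, gaussPoss m P x * gaussPoss (O *ᵥ x) R y
      = Real.exp (-(1 / 2 : ℝ) * ((x - mh) ⬝ᵥ (M *ᵥ (x - mh)) + c)) := by
    intro x
    rw [gaussPoss, gaussPoss, ← Real.exp_add]
    congr 1
    rw [hc_def, ← key x]
    ring
  have hub : ∀ x : Fin d → ℝ,
      gaussPoss m P x * gaussPoss (O *ᵥ x) R y ≤ Real.exp (-(1 / 2 : ℝ) * c) := by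
    intro x
    rw [hgval x]
    apply Real.exp_le_exp.mpr
    nlinarith [hqnn x]
  have hbdd : BddAbove (Set.range fun x' : Fin d → ℝ =>
      gaussPoss m P x' * gaussPoss (O *ᵥ x') R y) := by
    refine ⟨Real.exp (-(1 / 2 : ℝ) * c), ?_⟩
    rintro z ⟨x, rfl⟩
    exact hub x
  have hval_mh : gaussPoss m P mh * gaussPoss (O *ᵥ mh) R y
      = Real.exp (-(1 / 2 : ℝ) * c) := by
    rw [hgval mh]
    simp
  have hsup : (⨆ x' : Fin d → ℝ, gaussPoss m P x' * gaussPoss (O *ᵥ x') R y)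
      = Real.exp (-(1 / 2 : ℝ) * c) := by
    apply le_antisymm
    · exact ciSup_le hub
    · rw [← hval_mh]
      exact le_ciSup hbdd mh
  refine ⟨?_, hSigpd, ?_⟩
  · rw [hsup]; exact Real.exp_pos _
  · intro x
    rw [hsup, hgval x, gaussPoss, hSiginv, ← Real.exp_sub]
    congr 1
    ring
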